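/- Let p be a prime and q a positive integer, and let a, b be integers with gcd(a, q) = gcd(b, q) = d. Then the number of solutions x modulo q of a·x ≡ b (mod q) with gcd(x, q) = 1 equals φ(q)/φ(q/d). In particular this number is always between 1 and d. -/

import Mathlib

open scoped Classical

open Function in
lemma fiber_card_aux {G H : Type*} [Group G] [Fintype G] [Group H] [Fintype H]
    [DecidableEq H] (f : G →* H) (hf : Surjective f) (y : H) :
    (Finset.univ.filter fun x => f x = y).card = Fintype.card G / Fintype.card H := by
  obtain ⟨x₀, hx₀⟩ := hf y
  have e1 : (Finset.univ.filter fun x => f x = y) ≃ f.ker := by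
    refine ⟨fun x => ⟨x.1 * x₀⁻¹, ?_⟩, fun x => ⟨x.1 * x₀, ?_⟩, ?_, ?_⟩
    · have := (Finset.mem_filter.mp x.2).2
      simp [MonoidHom.mem_ker, this, hx₀]
    · have := x.2
      simp only [MonoidHom.mem_ker] at this
      simp [this, hx₀]
    · intro x; ext; simp
    · intro x; ext; simp
  have hcard : Fintype.card G = Fintype.card H * Nat.card f.ker := by
    have e2 : G ⧸ f.ker ≃ H := QuotientGroup.quotientKerEquivOfSurjective f hf
    rw [← Nat.card_eq_fintype_card, ← Nat.card_eq_fintype_card,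
      ← Nat.card_congr e2, ← Subgroup.card_eq_card_quotient_mul_card_subgroup f.ker]
  have : (Finset.univ.filter fun x => f x = y).card = Nat.card f.ker := by
    rw [← Nat.card_eq_finsetCard, Nat.card_congr e1]
  rw [this, hcard, Nat.mul_div_cancel_left _ Fintype.card_pos]

theorem stmt_2 (q : ℕ) (hq : 0 < q) (a b d : ℕ) (ha : Nat.gcd a q = d)
    (hb : Nat.gcd b q = d) :
    ((Finset.range q).filter fun x => Nat.gcd x q = 1 ∧ a * x ≡ b [MOD q]).card =
        q.totient / (q / d).totient ∧
      1 ≤ ((Finset.range q).filter fun x => Nat.gcd x q = 1 ∧ a * x ≡ b [MOD q]).card ∧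
      ((Finset.range q).filter fun x => Nat.gcd x q = 1 ∧ a * x ≡ b [MOD q]).card ≤ d := by
  haveI : NeZero q := ⟨hq.ne'⟩
  set m := q / d with hm
  have hd0 : 0 < d := ha ▸ Nat.gcd_pos_of_pos_right a hq
  have hdvd : d ∣ q := ha ▸ Nat.gcd_dvd_right a q
  have hqm : d * m = q := Nat.mul_div_cancel' hdvd
  have hm0 : 0 < m := Nat.div_pos (Nat.le_of_dvd hq hdvd) hd0
  haveI : NeZero m := ⟨hm0.ne'⟩
  have hmdvd : m ∣ q := Nat.div_dvd_of_dvd hdvd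
  have hA : Nat.Coprime (a / d) m := by
    rw [hm, ← ha]; exact Nat.coprime_div_gcd_div_gcd (ha ▸ hd0)
  have hB : Nat.Coprime (b / d) m := by
    rw [hm, ← hb]; exact Nat.coprime_div_gcd_div_gcd (hb ▸ hd0)
  have had : d ∣ a := ha ▸ Nat.gcd_dvd_left a q
  have hbd : d ∣ b := hb ▸ Nat.gcd_dvd_left b q
  have hmod : ∀ x : ℕ, (a * x ≡ b [MOD q] ↔ (a / d) * x ≡ b / d [MOD m]) := by
    intro x
    obtain ⟨A, hA'⟩ := had
    obtain ⟨B, hB'⟩ := hbd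
    have h1 : a / d = A := by rw [hA', Nat.mul_div_cancel_left _ hd0]
    have h2 : b / d = B := by rw [hB', Nat.mul_div_cancel_left _ hd0]
    rw [h1, h2, Nat.modEq_iff_dvd, Nat.modEq_iff_dvd, hA', hB', ← hqm]
    push_cast
    rw [show ((d:ℤ) * B - (d:ℤ) * A * x) = (d:ℤ) * ((B:ℤ) - (A:ℤ) * x) by ring]
    exact mul_dvd_mul_iff_left (by exact_mod_cast hd0.ne' : (d:ℤ) ≠ 0)
  set f := ZMod.unitsMap hmdvd with hf_def
  have hf : Function.Surjective f := ZMod.unitsMap_surjective hmdvd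
  set ua : (ZMod m)ˣ := ZMod.unitOfCoprime _ hA with hua
  set ub : (ZMod m)ˣ := ZMod.unitOfCoprime _ hB with hub
  set y₀ : (ZMod m)ˣ := ua⁻¹ * ub with hy₀
  have key : ∀ (x : ℕ) (hx : Nat.Coprime x q),
      (a * x ≡ b [MOD q] ↔ f (ZMod.unitOfCoprime x hx) = y₀) := by
    intro x hx
    have hfval : (↑(f (ZMod.unitOfCoprime x hx)) : ZMod m) = (x : ZMod m) := by
      simp [hf_def, ZMod.unitsMap_def, ZMod.coe_unitOfCoprime, ZMod.cast_natCast hmdvd]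
    rw [hmod, hy₀, eq_inv_mul_iff_mul_eq, Units.ext_iff, Units.val_mul, hfval, hua, hub,
      ZMod.coe_unitOfCoprime, ZMod.coe_unitOfCoprime, ← Nat.cast_mul,
      ZMod.natCast_eq_natCast_iff]
  have hcardeq : ((Finset.range q).filter fun x => Nat.gcd x q = 1 ∧ a * x ≡ b [MOD q]).card
      = (Finset.univ.filter fun u : (ZMod q)ˣ => f u = y₀).card := by
    refine Finset.card_bij' (fun x hx => ZMod.unitOfCoprime x (Finset.mem_filter.mp hx).2.1)
      (fun u _ => (↑u : ZMod q).val) ?_ ?_ ?_ ?_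
    · intro x hx
      simp only [Finset.mem_filter, Finset.mem_univ, true_and]
      exact (key x (Finset.mem_filter.mp hx).2.1).mp (Finset.mem_filter.mp hx).2.2
    · intro u hu
      simp only [Finset.mem_filter, Finset.mem_univ, true_and] at hu
      refine Finset.mem_filter.mpr ⟨Finset.mem_range.mpr (ZMod.val_lt _), ZMod.val_coe_unit_coprime u, ?_⟩
      refine (key _ (ZMod.val_coe_unit_coprime u)).mpr ?_
      have : ZMod.unitOfCoprime (↑u : ZMod q).val (ZMod.val_coe_unit_coprime u) = u := by
        apply Units.ext
        simp [ZMod.coe_unitOfCoprime, ZMod.natCast_val, ZMod.cast_id]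
      rw [this]; exact hu
    · intro x hx
      simp only [ZMod.coe_unitOfCoprime]
      exact ZMod.val_natCast_of_lt (Finset.mem_range.mp (Finset.mem_filter.mp hx).1)
    · intro u hu
      apply Units.ext
      simp [ZMod.coe_unitOfCoprime, ZMod.natCast_val, ZMod.cast_id]
  have hmain : ((Finset.range q).filter fun x => Nat.gcd x q = 1 ∧ a * x ≡ b [MOD q]).card
      = q.totient / m.totient := by
    rw [hcardeq, fiber_card_aux f hf y₀, ZMod.card_units_eq_totient, ZMod.card_units_eq_totient]
  refine ⟨hmain, ?_, ?_⟩
  · rw [hmain]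
    have h1 : m.totient ∣ q.totient := Nat.totient_dvd_of_dvd hmdvd
    have h2 : 0 < m.totient := Nat.totient_pos.mpr hm0
    exact (Nat.one_le_div_iff h2).mpr (Nat.le_of_dvd (Nat.totient_pos.mpr hq) h1)
  · rw [show d = (Finset.range d).card from (Finset.card_range d).symm]
    apply Finset.card_le_card_of_injOn (fun x => x / m)
    · intro x hx
      simp only [Finset.coe_filter, Finset.mem_filter, Finset.mem_range, Set.mem_setOf_eq] at hx
      exact Finset.mem_range.mpr ((Nat.div_lt_iff_lt_mul hm0).mpr (by rw [hqm]; exact hx.1))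
    · intro x hx y hy hxy
      simp only [Finset.coe_filter, Finset.mem_range, Set.mem_setOf_eq] at hx hy
      have hxm : x ≡ y [MOD m] := by
        have h1 := (hmod x).mp hx.2.2
        have h2 := (hmod y).mp hy.2.2
        exact Nat.ModEq.cancel_left_of_coprime (by rwa [Nat.coprime_comm] at hA) (h1.trans h2.symm)
      have hxy' : x / m = y / m := hxy
      have hmm : x % m = y % m := hxm
      have e1 := Nat.div_add_mod x m
      have e2 := Nat.div_add_mod y m
      rw [hxy', hmm] at e1
      omega
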